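/- arXiv:2502.00753 — 4 statements merged into one kernel-verified Lean document; each statement's English description precedes it below -/
import Mathlib

section
/- Let f be in the class F_{ℓ,r}(‖·‖) (i.e., f is (ℓ,r)*-smooth). Then f belongs to the class F_ℓ(‖·‖) (i.e., f is ℓ*-smooth): for almost every x ∈ X, f is twice differentiable at x and ‖∇²f(x)h‖_* ≤ ℓ(‖∇f(x)‖_*)·‖h‖ for all h ∈ X. -/
open MeasureTheory

/-- If `f` is `(ℓ,r)*`-smooth (i.e. `f ∈ F_{ℓ,r}(‖·‖)`), then `f` is
`ℓ*`-smooth (i.e. `f ∈ F_ℓ(‖·‖)`): for almost every `x ∈ X`, `f` is twice differentiable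
at `x` and `‖∇²f(x)h‖_* ≤ ℓ(‖∇f(x)‖_*)·‖h‖` for all `h ∈ X`. -/
theorem ell_r_star_smooth_subset_ell_star_smooth
    {E : Type*} [NormedAddCommGroup E] [NormedSpace ℝ E] [FiniteDimensional ℝ E]
    [MeasurableSpace E] [BorelSpace E] (μ : Measure E) [μ.IsAddHaarMeasure]
    (X : Set E) (hXne : X.Nonempty) (hXopen : IsOpen X) (hXconv : Convex ℝ X)
    (f : E → ℝ) (f' : E → E →L[ℝ] ℝ) (hdiff : ∀ x ∈ X, HasFDerivAt f (f' x) x)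
    (ell : ℝ → ℝ) (hellmono : MonotoneOn ell (Set.Ici 0))
    (hellcont : ContinuousOn ell (Set.Ici 0)) (hellpos : ∀ a, 0 ≤ a → 0 < ell a)
    (r : ℝ → ℝ) (hrmono : AntitoneOn r (Set.Ici 0))
    (hrcont : ContinuousOn r (Set.Ici 0)) (hrpos : ∀ a, 0 ≤ a → 0 < r a)
    (hball : ∀ x ∈ X, Metric.closedBall x (r ‖f' x‖) ⊆ X)
    (hlip : ∀ x ∈ X, ∀ x₁ ∈ Metric.closedBall x (r ‖f' x‖),
      ∀ x₂ ∈ Metric.closedBall x (r ‖f' x‖),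
        ‖f' x₁ - f' x₂‖ ≤ ell ‖f' x‖ * ‖x₁ - x₂‖) :
    ∀ᵐ x ∂μ, x ∈ X → ∃ f'' : E →L[ℝ] E →L[ℝ] ℝ, HasFDerivAt f' f'' x ∧
      ∀ h ∈ X, ‖f'' h‖ ≤ ell ‖f' x‖ * ‖h‖ := by
  -- Lipschitz property of f' on each closed ball
  have hlipOn : ∀ x ∈ X, LipschitzOnWith (ell ‖f' x‖).toNNReal f'
      (Metric.closedBall x (r ‖f' x‖)) := by
    intro x hx
    rw [lipschitzOnWith_iff_dist_le_mul]
    intro y hy z hz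
    rw [dist_eq_norm, dist_eq_norm,
      Real.coe_toNNReal _ (le_of_lt (hellpos _ (norm_nonneg _)))]
    exact hlip x hx y hy z hz
  -- countable subcover of X by the open balls
  obtain ⟨T, hTc, hTU⟩ := TopologicalSpace.isOpen_iUnion_countable
    (fun x : X => Metric.ball (x : E) (r ‖f' (x : E)‖))
    (fun x => Metric.isOpen_ball)
  have hcover : X ⊆ ⋃ t ∈ T, Metric.ball (t : E) (r ‖f' (t : E)‖) := by
    rw [hTU]
    intro y hy
    exact Set.mem_iUnion.2 ⟨⟨y, hy⟩, Metric.mem_ball_self (hrpos _ (norm_nonneg _))⟩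
  -- a.e. differentiability of f' on each ball via Rademacher
  have hae : ∀ᵐ y ∂μ, ∀ t ∈ T, y ∈ Metric.closedBall (t : E) (r ‖f' (t : E)‖) →
      DifferentiableWithinAt ℝ f' (Metric.closedBall (t : E) (r ‖f' (t : E)‖)) y := by
    rw [ae_ball_iff hTc]
    intro t _
    exact (hlipOn (t : E) t.2).ae_differentiableWithinAt_of_mem
  filter_upwards [hae] with y hy hyX
  obtain ⟨t, ht, hyt⟩ : ∃ t ∈ T, y ∈ Metric.ball (t : E) (r ‖f' (t : E)‖) := by
    simpa using hcover hyX
  have hnhds : Metric.closedBall (t : E) (r ‖f' (t : E)‖) ∈ nhds y :=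
    Filter.mem_of_superset (Metric.isOpen_ball.mem_nhds hyt) Metric.ball_subset_closedBall
  have hdy : DifferentiableAt ℝ f' y :=
    (hy t ht (Metric.ball_subset_closedBall hyt)).differentiableAt hnhds
  refine ⟨fderiv ℝ f' y, hdy.hasFDerivAt, ?_⟩
  have hnorm : ‖fderiv ℝ f' y‖ ≤ ell ‖f' y‖ := by
    have := hdy.hasFDerivAt.le_of_lipschitzOn
      (Metric.closedBall_mem_nhds y (hrpos _ (norm_nonneg _))) (hlipOn y hyX)
    rwa [Real.coe_toNNReal _ (le_of_lt (hellpos _ (norm_nonneg _)))] at this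
  intro h _
  calc ‖fderiv ℝ f' y h‖ ≤ ‖fderiv ℝ f' y‖ * ‖h‖ := (fderiv ℝ f' y).le_opNorm h
    _ ≤ ell ‖f' y‖ * ‖h‖ := by
        exact mul_le_mul_of_nonneg_right hnorm (norm_nonneg _)
end

section
/- Let ψ be a 1-strongly convex, continuously differentiable distance-generating function on X with Bregman divergence B. For any linear functional g on E and any x₀ ∈ X, if x⁺ ∈ X minimizes x ↦ ⟨g, x⟩ + B(x, x₀) over X, then ‖x⁺ − x₀‖ ≤ ‖g‖_*. -/
/-- For a 1-strongly convex, continuously differentiable distance-generating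
function `ψ` on `X` with Bregman divergence `B`, if `x⁺ ∈ X` minimizes
`x ↦ ⟨g, x⟩ + B(x, x₀)` over `X`, then `‖x⁺ − x₀‖ ≤ ‖g‖_*`. -/
theorem prox_mapping_stability
    {E : Type*} [NormedAddCommGroup E] [NormedSpace ℝ E] [FiniteDimensional ℝ E]
    (X : Set E) (hXne : X.Nonempty) (hXconv : Convex ℝ X)
    (ψ : E → ℝ) (ψ' : E → E →L[ℝ] ℝ)
    (hψdiff : ∀ x ∈ X, HasFDerivAt ψ (ψ' x) x) (hψcont : ContinuousOn ψ' X)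
    (hψsc : ∀ x ∈ X, ∀ y ∈ X, ‖x - y‖ ^ 2 ≤ (ψ' x - ψ' y) (x - y))
    (B : E → E → ℝ) (hB : ∀ x y, B x y = ψ x - ψ y - (ψ' y) (x - y))
    (g : E →L[ℝ] ℝ) (x₀ : E) (hx₀ : x₀ ∈ X)
    (xp : E) (hxp : xp ∈ X)
    (hmin : ∀ y ∈ X, g xp + B xp x₀ ≤ g y + B y x₀) :
    ‖xp - x₀‖ ≤ ‖g‖ := by
  -- the objective function
  set f : E → ℝ := fun x => g x + B x x₀ with hf
  have hfeq : f = fun x => g x + (ψ x - ψ x₀ - (ψ' x₀) (x - x₀)) := by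
    funext x; simp [hf, hB]
  -- derivative of f at xp
  have hderiv : HasFDerivAt f (g + ψ' xp - ψ' x₀) xp := by
    rw [hfeq]
    have h1 : HasFDerivAt (fun x => g x) g xp := g.hasFDerivAt
    have h2 : HasFDerivAt ψ (ψ' xp) xp := hψdiff xp hxp
    have h3 : HasFDerivAt (fun x => (ψ' x₀) (x - x₀)) (ψ' x₀) xp := by
      simp only [map_sub]
      exact ((ψ' x₀).hasFDerivAt (x := xp)).sub_const ((ψ' x₀) x₀)
    have h4 := h1.add ((h2.sub_const (ψ x₀)).sub h3)
    exact h4.congr_fderiv (by abel)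
  -- minimality gives: derivative nonneg in direction x₀ - xp
  have hmin' : IsLocalMinOn f X xp :=
    eventually_nhdsWithin_of_forall fun y hy => hmin y hy
  have htc : x₀ - xp ∈ posTangentConeAt X xp :=
    sub_mem_posTangentConeAt_of_segment_subset (hXconv.segment_subset hxp hx₀)
  have hopt : 0 ≤ (g + ψ' xp - ψ' x₀) (x₀ - xp) :=
    hmin'.hasFDerivWithinAt_nonneg hderiv.hasFDerivWithinAt htc
  have hsc := hψsc xp hxp x₀ hx₀
  have key : ‖xp - x₀‖ ^ 2 ≤ g (x₀ - xp) := by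
    have : (g + ψ' xp - ψ' x₀) (x₀ - xp)
        = g (x₀ - xp) - (ψ' xp - ψ' x₀) (xp - x₀) := by
      simp [map_sub]; ring
    rw [this] at hopt
    linarith
  have hb : g (x₀ - xp) ≤ ‖g‖ * ‖xp - x₀‖ := by
    calc g (x₀ - xp) ≤ ‖g (x₀ - xp)‖ := le_abs_self _
    _ ≤ ‖g‖ * ‖x₀ - xp‖ := g.le_opNorm _
    _ = ‖g‖ * ‖xp - x₀‖ := by rw [norm_sub_rev]
  rcases eq_or_lt_of_le (norm_nonneg (xp - x₀)) with h0 | h0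
  · rw [← h0]; exact norm_nonneg g
  · have : ‖xp - x₀‖ ^ 2 ≤ ‖g‖ * ‖xp - x₀‖ := key.trans hb
    nlinarith
end

section
/- Let w ∈ ℝⁿ, b ∈ ℝ, C ∈ ℝ with C ≠ 0, and f₁(x) := C·exp(wᵀx + b) for x ∈ ℝⁿ. Then for every x ∈ ℝⁿ: (i) the spectral norm of the Hessian satisfies ‖∇²f₁(x)‖₂ = ‖w‖₂·‖∇f₁(x)‖₂, so f₁ is ℓ̂-smooth in the ℓ₂ sense with link function ℓ̂(α) = ‖w‖₂·α; (ii) the ℓ₁→ℓ∞ operator norm of the Hessian satisfies sup_{h ≠ 0} ‖∇²f₁(x)h‖_∞/‖h‖₁ = ‖w‖_∞·‖∇f₁(x)‖_∞, so f₁ is ℓ̃*-smooth with respect to ‖·‖₁ with link function ℓ̃(α) = ‖w‖_∞·α. -/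
open RealInnerProductSpace

/-- For `f₁(x) := C·exp(wᵀx + b)` on `ℝⁿ` with gradient `g` and Hessian `H`:
(i) the spectral norm of the Hessian satisfies `‖∇²f₁(x)‖₂ = ‖w‖₂·‖∇f₁(x)‖₂`, so `f₁` is
`ℓ̂`-smooth in the `ℓ₂` sense with `ℓ̂(α) = ‖w‖₂·α`;
(ii) the `ℓ₁→ℓ∞` operator norm satisfies
`sup_{h ≠ 0} ‖∇²f₁(x)h‖_∞/‖h‖₁ = ‖w‖_∞·‖∇f₁(x)‖_∞`, so `f₁` is `ℓ̃*`-smooth w.r.t. `‖·‖₁`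
with `ℓ̃(α) = ‖w‖_∞·α`. -/
theorem logistic_kernel_generalized_smooth
    (n : ℕ) (hn : 0 < n)
    (w : EuclideanSpace ℝ (Fin n)) (b C : ℝ) (hC : C ≠ 0)
    (f₁ : EuclideanSpace ℝ (Fin n) → ℝ)
    (hf₁ : ∀ x, f₁ x = C * Real.exp (⟪w, x⟫ + b))
    (g : EuclideanSpace ℝ (Fin n) → EuclideanSpace ℝ (Fin n))
    (H : EuclideanSpace ℝ (Fin n) → EuclideanSpace ℝ (Fin n) →L[ℝ] EuclideanSpace ℝ (Fin n))
    (hg : ∀ x, HasGradientAt f₁ (g x) x)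
    (hH : ∀ x, HasFDerivAt g (H x) x)
    (x : EuclideanSpace ℝ (Fin n)) :
    ‖H x‖ = ‖w‖ * ‖g x‖ ∧
    (⨆ h : {h : EuclideanSpace ℝ (Fin n) // h ≠ 0},
        (⨆ i, |H x h.1 i|) / ∑ i, |h.1 i|) = (⨆ i, |w i|) * (⨆ i, |g x i|) := by
  haveI : Nonempty (Fin n) := ⟨⟨0, hn⟩⟩
  -- the explicit scalar factor
  set φ : EuclideanSpace ℝ (Fin n) → ℝ := fun y => C * Real.exp (⟪w, y⟫ + b) with hφdef
  have hf₁' : f₁ = φ := funext hf₁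
  -- fderiv of φ at any point
  have hφF : ∀ y : EuclideanSpace ℝ (Fin n), HasFDerivAt φ (φ y • innerSL ℝ w) y := by
    intro y
    have h1 : HasFDerivAt (fun z : EuclideanSpace ℝ (Fin n) => ⟪w, z⟫ + b) (innerSL ℝ w) y :=
      ((innerSL ℝ w).hasFDerivAt).add_const b
    have h2 := (h1.exp).const_mul C
    have : C • Real.exp (⟪w, y⟫ + b) • innerSL ℝ w = φ y • innerSL ℝ w := by
      rw [smul_smul]
    rw [this] at h2
    exact h2
  -- gradient of f₁ at any point is φ y • w
  have hgrad : ∀ y : EuclideanSpace ℝ (Fin n), HasGradientAt f₁ (φ y • w) y := by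
    intro y
    rw [hf₁', hasGradientAt_iff_hasFDerivAt]
    have heq : (InnerProductSpace.toDual ℝ (EuclideanSpace ℝ (Fin n))) (φ y • w) = φ y • innerSL ℝ w := by
      ext h
      simp [InnerProductSpace.toDual_apply_apply, real_inner_smul_left]
    rw [heq]
    exact hφF y
  have hgeq : ∀ y : EuclideanSpace ℝ (Fin n), g y = φ y • w := fun y => (hg y).unique (hgrad y)
  have hgfun : g = fun y => φ y • w := funext hgeq
  -- fderiv of g at x
  set c : ℝ := φ x with hc
  have hHeq : H x = (c • innerSL ℝ w).smulRight w := by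
    have h1 : HasFDerivAt (fun y : EuclideanSpace ℝ (Fin n) => φ y • w) ((c • innerSL ℝ w).smulRight w) x :=
      (hφF x).smul_const w
    rw [← hgfun] at h1
    exact (hH x).unique h1
  have hc0 : c ≠ 0 := mul_ne_zero hC (Real.exp_ne_zero _)
  -- Part (i)
  have hnormH : ‖H x‖ = |c| * ‖w‖ * ‖w‖ := by
    rw [hHeq, ContinuousLinearMap.norm_smulRight_apply, norm_smul, innerSL_apply_norm,
      Real.norm_eq_abs]
  have hnormg : ‖g x‖ = |c| * ‖w‖ := by
    rw [hgeq x, norm_smul, Real.norm_eq_abs]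
  constructor
  · rw [hnormH, hnormg]; ring
  -- Part (ii)
  · set S : ℝ := ⨆ i, |w i| with hS
    have hbdd : BddAbove (Set.range fun i => |w i|) := Set.finite_range _ |>.bddAbove
    have hwle : ∀ i, |w i| ≤ S := fun i => le_ciSup hbdd i
    have hS0 : 0 ≤ S := le_trans (abs_nonneg _) (hwle (Classical.arbitrary _))
    -- H x h i = (c * ⟪w,h⟫) * w i
    have hHapp : ∀ h : EuclideanSpace ℝ (Fin n), ∀ i, H x h i = (c * ⟪w, h⟫) * w i := by
      intro h i
      rw [hHeq]
      simp only [ContinuousLinearMap.smulRight_apply, ContinuousLinearMap.smul_apply,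
        innerSL_apply_apply, smul_eq_mul]
      rfl
    have habs : ∀ a : ℝ, (⨆ i, |a * w i|) = |a| * S := by
      intro a
      simp_rw [abs_mul]
      rw [hS, Real.mul_iSup_of_nonneg (abs_nonneg a)]
    have hsupH : ∀ h : EuclideanSpace ℝ (Fin n), (⨆ i, |H x h i|) = (|c| * |⟪w, h⟫|) * S := by
      intro h
      have : (fun i => |H x h i|) = fun i => |(c * ⟪w, h⟫) * w i| := by
        funext i; rw [hHapp h i]
      rw [this, habs, abs_mul]
    have hgi : ∀ i, g x i = c * w i := by
      intro i; rw [hgeq x]; rfl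
    have hsupg : (⨆ i, |g x i|) = |c| * S := by
      have : (fun i => |g x i|) = fun i => |c * w i| := by funext i; rw [hgi]
      rw [this, habs]
    rw [hsupg]
    -- inner product bound
    have hinner : ∀ h : EuclideanSpace ℝ (Fin n), |⟪w, h⟫| ≤ S * ∑ i, |h i| := by
      intro h
      have : ⟪w, h⟫ = ∑ i, w i * h i := by
        rw [PiLp.inner_apply]; simp [mul_comm]
      rw [this, Finset.mul_sum]
      refine le_trans (Finset.abs_sum_le_sum_abs _ _) (Finset.sum_le_sum fun i _ => ?_)
      rw [abs_mul]
      exact mul_le_mul_of_nonneg_right (hwle i) (abs_nonneg _)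
    have hsum_pos : ∀ h : EuclideanSpace ℝ (Fin n), h ≠ 0 → 0 < ∑ i, |h i| := by
      intro h hne
      obtain ⟨i, hi⟩ : ∃ i, h i ≠ 0 := by
        by_contra hcon
        push_neg at hcon
        exact hne (PiLp.ext hcon)
      exact Finset.sum_pos' (fun j _ => abs_nonneg _)
        ⟨i, Finset.mem_univ i, abs_pos.mpr hi⟩
    -- each term is at most |c| * S * S
    have hterm_le : ∀ h : {h : EuclideanSpace ℝ (Fin n) // h ≠ 0},
        (⨆ i, |H x h.1 i|) / ∑ i, |h.1 i| ≤ |c| * S * S := by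
      rintro ⟨h, hne⟩
      rw [hsupH]
      rw [div_le_iff₀ (hsum_pos h hne)]
      calc |c| * |⟪w, h⟫| * S ≤ |c| * (S * ∑ i, |h i|) * S := by
            apply mul_le_mul_of_nonneg_right _ hS0
            exact mul_le_mul_of_nonneg_left (hinner h) (abs_nonneg _)
        _ = |c| * S * S * ∑ i, |h i| := by ring
    -- pick maximizing coordinate
    obtain ⟨j, hj⟩ := Finite.exists_max fun i => |w i|
    have hSj : S = |w j| := le_antisymm (ciSup_le hj) (le_ciSup hbdd j)
    -- the witness h = single j 1
    have hone : (EuclideanSpace.single j (1:ℝ)) ≠ 0 := by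
      intro hcon
      have h0 : EuclideanSpace.single j (1:ℝ) j = 0 := by rw [hcon]; rfl
      rw [EuclideanSpace.single_apply] at h0
      simp at h0
    have hwitness : (⨆ i, |H x (EuclideanSpace.single j (1:ℝ)) i|) /
        (∑ i, |EuclideanSpace.single j (1:ℝ) i|) = |c| * S * S := by
      have h1 : ⟪w, EuclideanSpace.single j (1:ℝ)⟫ = w j := by
        rw [EuclideanSpace.inner_single_right]; simp
      have h2 : (∑ i, |EuclideanSpace.single j (1:ℝ) i|) = 1 := by
        rw [Finset.sum_eq_single j]
        · rw [EuclideanSpace.single_apply]; simp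
        · intro i _ hij
          rw [EuclideanSpace.single_apply]
          simp [hij]
        · intro hj'; exact absurd (Finset.mem_univ j) hj'
      rw [hsupH, h1, h2, div_one, hSj]
    haveI : Nonempty {h : EuclideanSpace ℝ (Fin n) // h ≠ 0} :=
      ⟨⟨EuclideanSpace.single j (1:ℝ), hone⟩⟩
    apply le_antisymm
    · refine ciSup_le fun h => (hterm_le h).trans_eq (by ring)
    · have hb : BddAbove (Set.range fun h : {h : EuclideanSpace ℝ (Fin n) // h ≠ 0} =>
          (⨆ i, |H x h.1 i|) / ∑ i, |h.1 i|) := by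
        refine ⟨|c| * S * S, ?_⟩
        rintro _ ⟨h, rfl⟩
        exact hterm_le h
      have := le_ciSup hb (⟨EuclideanSpace.single j (1:ℝ), hone⟩ : {h : EuclideanSpace ℝ (Fin n) // h ≠ 0})
      rw [hwitness] at this
      calc S * (|c| * S) = |c| * S * S := by ring
        _ ≤ _ := this
end

section
/- Let w ∈ ℝⁿ, C ∈ ℝ with C ≠ 0, and f₂(x) := C·log(1 + exp(−wᵀx)) for x ∈ ℝⁿ (the logistic regression loss). Then for every x ∈ ℝⁿ: (i) ‖∇²f₂(x)‖₂ ≤ ‖w‖₂·‖∇f₂(x)‖₂, so f₂ is ℓ̂-smooth in the ℓ₂ sense with link function ℓ̂(α) = ‖w‖₂·α; (ii) sup_{h ≠ 0} ‖∇²f₂(x)h‖_∞/‖h‖₁ ≤ ‖w‖_∞·‖∇f₂(x)‖_∞, so f₂ is ℓ̃*-smooth with respect to ‖·‖₁ with link function ℓ̃(α) = ‖w‖_∞·α; and moreover (iii) ‖∇²f₂(x)‖₂ ≤ |C|·‖w‖₂²/4. -/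
open RealInnerProductSpace

lemma lrgs_toDual_smul_eq (n : ℕ) (w : EuclideanSpace ℝ (Fin n)) (c : ℝ) :
    (InnerProductSpace.toDual ℝ (EuclideanSpace ℝ (Fin n))) (c • w) = c • innerSL ℝ w := by
  ext h
  simp [InnerProductSpace.toDual_apply_apply, real_inner_smul_left]

lemma lrgs_gradient (n : ℕ) (w : EuclideanSpace ℝ (Fin n)) (C : ℝ)
    (f₂ : EuclideanSpace ℝ (Fin n) → ℝ)
    (hf₂ : ∀ x, f₂ x = C * Real.log (1 + Real.exp (-⟪w, x⟫)))
    (y : EuclideanSpace ℝ (Fin n)) :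
    HasGradientAt f₂ ((-(C * (Real.exp (-⟪w, y⟫) / (1 + Real.exp (-⟪w, y⟫))))) • w) y := by
  rw [hasGradientAt_iff_hasFDerivAt, lrgs_toDual_smul_eq]
  have hinner : HasFDerivAt (fun z : EuclideanSpace ℝ (Fin n) => ⟪w, z⟫)
      (innerSL ℝ w) y := (innerSL ℝ w).hasFDerivAt
  have hc : HasDerivAt (fun t => C * Real.log (1 + Real.exp (-t)))
      (-(C * (Real.exp (-⟪w, y⟫) / (1 + Real.exp (-⟪w, y⟫))))) ⟪w, y⟫ := by
    have he : HasDerivAt (fun t : ℝ => 1 + Real.exp (-t)) (-Real.exp (-(⟪w,y⟫))) ⟪w,y⟫ := by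
      simpa using ((hasDerivAt_id (⟪w,y⟫ : ℝ)).neg.exp).const_add 1
    have h0 : (0:ℝ) < 1 + Real.exp (-⟪w,y⟫) := by positivity
    have := (he.log h0.ne').const_mul C
    exact this.congr_deriv (by ring)
  have := hc.comp_hasFDerivAt y hinner
  refine this.congr_of_eventuallyEq (Filter.Eventually.of_forall fun z => ?_)
  simp [hf₂ z, Function.comp]

lemma lrgs_hessian (n : ℕ) (w : EuclideanSpace ℝ (Fin n)) (C : ℝ)
    (x : EuclideanSpace ℝ (Fin n)) :
    HasFDerivAt (fun y : EuclideanSpace ℝ (Fin n) =>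
        (-(C * (Real.exp (-⟪w, y⟫) / (1 + Real.exp (-⟪w, y⟫))))) • w)
      (((C * (Real.exp (-⟪w, x⟫) / (1 + Real.exp (-⟪w, x⟫)) ^ 2)) • innerSL ℝ w).smulRight w)
      x := by
  have hinner : HasFDerivAt (fun z : EuclideanSpace ℝ (Fin n) => ⟪w, z⟫)
      (innerSL ℝ w) x := (innerSL ℝ w).hasFDerivAt
  have hsig : HasDerivAt (fun t => -(C * (Real.exp (-t) / (1 + Real.exp (-t)))))
      (C * (Real.exp (-⟪w, x⟫) / (1 + Real.exp (-⟪w, x⟫)) ^ 2)) ⟪w, x⟫ := by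
    have he : HasDerivAt (fun t : ℝ => Real.exp (-t)) (-Real.exp (-⟪w,x⟫)) ⟪w,x⟫ := by
      simpa using ((hasDerivAt_id (⟪w,x⟫ : ℝ)).neg.exp)
    have hd : HasDerivAt (fun t : ℝ => 1 + Real.exp (-t)) (-Real.exp (-⟪w,x⟫)) ⟪w,x⟫ := by
      simpa using he.const_add 1
    have h0 : (0:ℝ) < 1 + Real.exp (-⟪w,x⟫) := by positivity
    have := ((he.div hd h0.ne').const_mul C).neg
    refine this.congr_deriv ?_
    ring
  exact (hsig.comp_hasFDerivAt x hinner).smul_const w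

/-- For the logistic regression loss `f₂(x) := C·log(1 + exp(−wᵀx))` on `ℝⁿ`
with gradient `g` and Hessian `H`:
(i) `‖∇²f₂(x)‖₂ ≤ ‖w‖₂·‖∇f₂(x)‖₂`, so `f₂` is `ℓ̂`-smooth in the `ℓ₂` sense with
`ℓ̂(α) = ‖w‖₂·α`;
(ii) `sup_{h ≠ 0} ‖∇²f₂(x)h‖_∞/‖h‖₁ ≤ ‖w‖_∞·‖∇f₂(x)‖_∞`, so `f₂` is `ℓ̃*`-smooth w.r.t.
`‖·‖₁` with `ℓ̃(α) = ‖w‖_∞·α`;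
(iii) `‖∇²f₂(x)‖₂ ≤ |C|·‖w‖₂²/4`. -/
theorem logistic_regression_generalized_smooth
    (n : ℕ) (hn : 0 < n)
    (w : EuclideanSpace ℝ (Fin n)) (C : ℝ) (hC : C ≠ 0)
    (f₂ : EuclideanSpace ℝ (Fin n) → ℝ)
    (hf₂ : ∀ x, f₂ x = C * Real.log (1 + Real.exp (-⟪w, x⟫)))
    (g : EuclideanSpace ℝ (Fin n) → EuclideanSpace ℝ (Fin n))
    (H : EuclideanSpace ℝ (Fin n) → EuclideanSpace ℝ (Fin n) →L[ℝ] EuclideanSpace ℝ (Fin n))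
    (hg : ∀ x, HasGradientAt f₂ (g x) x)
    (hH : ∀ x, HasFDerivAt g (H x) x)
    (x : EuclideanSpace ℝ (Fin n)) :
    ‖H x‖ ≤ ‖w‖ * ‖g x‖ ∧
    (⨆ h : {h : EuclideanSpace ℝ (Fin n) // h ≠ 0},
        (⨆ i, |H x h.1 i|) / ∑ i, |h.1 i|) ≤ (⨆ i, |w i|) * (⨆ i, |g x i|) ∧
    ‖H x‖ ≤ |C| * ‖w‖ ^ 2 / 4 := by
  set s := (⟪w, x⟫ : ℝ) with hs
  set e := Real.exp (-s) with he
  have hepos : (0:ℝ) < e := Real.exp_pos _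
  have h1e : (0:ℝ) < 1 + e := by positivity
  -- identify g
  have hgeq : g = fun y : EuclideanSpace ℝ (Fin n) =>
      (-(C * (Real.exp (-⟪w, y⟫) / (1 + Real.exp (-⟪w, y⟫))))) • w := by
    funext y
    exact (hg y).unique (lrgs_gradient n w C f₂ hf₂ y)
  set a : ℝ := C * (e / (1 + e) ^ 2) with ha
  set c : ℝ := C * (e / (1 + e)) with hc2
  have hgx : g x = (-c) • w := by rw [hgeq]
  -- identify H
  have hHeq : H x = (a • innerSL ℝ w).smulRight w := by
    refine (hH x).unique ?_
    rw [hgeq]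
    exact lrgs_hessian n w C x
  -- basic scalar inequalities
  have hac : |a| ≤ |c| := by
    rw [ha, hc2, abs_mul, abs_mul]
    have : |e / (1 + e) ^ 2| ≤ |e / (1 + e)| := by
      rw [abs_of_pos (by positivity), abs_of_pos (by positivity)]
      rw [div_le_div_iff₀ (by positivity) (by positivity)]
      nlinarith [mul_nonneg (mul_nonneg hepos.le hepos.le) h1e.le]
    exact mul_le_mul_of_nonneg_left this (abs_nonneg C)
  have hquarter : |a| ≤ |C| / 4 := by
    rw [ha, abs_mul]
    have : |e / (1 + e) ^ 2| ≤ 1 / 4 := by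
      rw [abs_of_pos (by positivity), div_le_div_iff₀ (by positivity) (by norm_num)]
      nlinarith [sq_nonneg (1 - e)]
    calc |C| * |e / (1 + e) ^ 2| ≤ |C| * (1 / 4) :=
          mul_le_mul_of_nonneg_left this (abs_nonneg C)
      _ = |C| / 4 := by ring
  -- norm of H x
  have hHnorm : ‖H x‖ ≤ |a| * (‖w‖ * ‖w‖) := by
    refine ContinuousLinearMap.opNorm_le_bound _ (by positivity) fun h => ?_
    rw [hHeq]
    simp only [ContinuousLinearMap.smulRight_apply, ContinuousLinearMap.smul_apply,
      innerSL_apply_apply, smul_eq_mul]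
    rw [norm_smul]
    calc ‖a * ⟪w, h⟫‖ * ‖w‖ = |a| * |⟪w, h⟫| * ‖w‖ := by rw [Real.norm_eq_abs, abs_mul]
      _ ≤ |a| * (‖w‖ * ‖h‖) * ‖w‖ := by gcongr; exact abs_real_inner_le_norm w h
      _ = |a| * (‖w‖ * ‖w‖) * ‖h‖ := by ring
  have hgnorm : ‖g x‖ = |c| * ‖w‖ := by
    rw [hgx, norm_smul, Real.norm_eq_abs, abs_neg]
  refine ⟨?_, ?_, ?_⟩
  · -- (i)
    rw [hgnorm]
    calc ‖H x‖ ≤ |a| * (‖w‖ * ‖w‖) := hHnorm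
      _ ≤ |c| * (‖w‖ * ‖w‖) := by gcongr
      _ = ‖w‖ * (|c| * ‖w‖) := by ring
  · -- (ii)
    set W : ℝ := ⨆ i, |w i| with hW
    have hbdd : ∀ v : EuclideanSpace ℝ (Fin n), BddAbove (Set.range fun i => |v i|) :=
      fun v => Set.Finite.bddAbove (Set.finite_range _)
    haveI : Nonempty (Fin n) := ⟨⟨0, hn⟩⟩
    have hWle : ∀ i, |w i| ≤ W := fun i => le_ciSup (hbdd w) i
    have hWnn : 0 ≤ W := le_trans (abs_nonneg _) (hWle ⟨0, hn⟩)
    -- g x components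
    have hgi : ∀ i, |g x i| = |c| * |w i| := by
      intro i
      rw [hgx]
      simp [PiLp.smul_apply, smul_eq_mul, abs_mul]
    have hGn : |c| * W ≤ ⨆ i, |g x i| := by
      rcases eq_or_lt_of_le (abs_nonneg c) with h0 | h0
      · rw [← h0, zero_mul]
        exact le_trans (abs_nonneg _) (le_ciSup (hbdd (g x)) ⟨0, hn⟩)
      · rw [mul_comm, ← le_div_iff₀ h0]
        refine ciSup_le fun i => ?_
        rw [le_div_iff₀ h0, mul_comm, ← hgi i]
        exact le_ciSup (hbdd (g x)) i
    haveI : Nonempty {h : EuclideanSpace ℝ (Fin n) // h ≠ 0} := by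
      refine ⟨⟨EuclideanSpace.single ⟨0, hn⟩ (1:ℝ), fun h0 => ?_⟩⟩
      have := congrFun (congrArg (fun (v : EuclideanSpace ℝ (Fin n)) (i : Fin n) => v i) h0)
        ⟨0, hn⟩
      simp [EuclideanSpace.single_apply] at this
    refine ciSup_le fun h => ?_
    obtain ⟨h, hne⟩ := h
    simp only
    -- S positive
    have hi : ∃ i, h i ≠ 0 := by
      by_contra hcon
      push_neg at hcon
      exact hne (PiLp.ext hcon)
    obtain ⟨i₀, hi₀⟩ := hi
    set S : ℝ := ∑ i, |h i| with hS
    have hSpos : 0 < S := by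
      have : 0 < |h i₀| := abs_pos.mpr hi₀
      have h2 : |h i₀| ≤ S := Finset.single_le_sum (fun i _ => abs_nonneg (h i))
        (Finset.mem_univ i₀)
      linarith
    -- inner bound
    have hinnerb : |⟪w, h⟫| ≤ W * S := by
      have hin : (⟪w, h⟫ : ℝ) = ∑ i, w i * h i := by
        simp [PiLp.inner_apply, RCLike.inner_apply, mul_comm]
      rw [hin]
      calc |∑ i, w i * h i| ≤ ∑ i, |w i * h i| := Finset.abs_sum_le_sum_abs _ _
        _ ≤ ∑ i, W * |h i| := by
            refine Finset.sum_le_sum fun i _ => ?_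
            rw [abs_mul]
            exact mul_le_mul_of_nonneg_right (hWle i) (abs_nonneg _)
        _ = W * S := by rw [← Finset.mul_sum]
    -- numerator bound
    have hnum : (⨆ i, |H x h i|) ≤ |a| * (W * S) * W := by
      refine ciSup_le fun i => ?_
      have hxi : H x h i = (a * ⟪w, h⟫) * w i := by
        rw [hHeq]
        simp [ContinuousLinearMap.smulRight_apply, PiLp.smul_apply, smul_eq_mul]
      rw [hxi, abs_mul, abs_mul]
      calc |a| * |⟪w, h⟫| * |w i|
          ≤ |a| * (W * S) * |w i| :=
            mul_le_mul_of_nonneg_right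
              (mul_le_mul_of_nonneg_left hinnerb (abs_nonneg a)) (abs_nonneg _)
        _ ≤ |a| * (W * S) * W :=
            mul_le_mul_of_nonneg_left (hWle i)
              (mul_nonneg (abs_nonneg a) (mul_nonneg hWnn hSpos.le))
    rw [div_le_iff₀ hSpos]
    calc (⨆ i, |H x h i|) ≤ |a| * (W * S) * W := hnum
      _ = (|a| * W * W) * S := by ring
      _ ≤ (|c| * W * W) * S := by
          refine mul_le_mul_of_nonneg_right ?_ (le_of_lt hSpos)
          exact mul_le_mul_of_nonneg_right (mul_le_mul_of_nonneg_right hac hWnn) hWnn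
      _ = (W * (|c| * W)) * S := by ring
      _ ≤ (W * (⨆ i, |g x i|)) * S := by
          refine mul_le_mul_of_nonneg_right (mul_le_mul_of_nonneg_left hGn hWnn)
            (le_of_lt hSpos)
  · -- (iii)
    calc ‖H x‖ ≤ |a| * (‖w‖ * ‖w‖) := hHnorm
      _ ≤ (|C| / 4) * (‖w‖ * ‖w‖) := by gcongr
      _ = |C| * ‖w‖ ^ 2 / 4 := by ring
end
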